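/- Let E be a real inner product space, let r_t : E → ℝ (for integers t, with r_s ≡ 0 for s ≤ 0) be differentiable functions, and let w ≥ 1, T ≥ 1 be integers and δ ≥ 0. Define u_{w,t}(θ) = (1/w) · Σ_{i=0}^{w-1} r_{t-i}(θ). Suppose θ_1, …, θ_T ∈ E satisfy the Batch-Update termination condition ‖∇u_{w,t-1}(θ_t)‖ ≤ δ for every t ∈ {1,…,T}, and suppose V_1,…,V_T ≥ 0 satisfy ‖∇r_t(θ) − ∇r_{t−w}(θ)‖² ≤ V_t for all θ ∈ E and t ∈ {1,…,T}. Then the average w-local regret satisfies (1/T) · Σ_{t=1}^T ‖∇u_{w,t}(θ_t)‖² ≤ 2δ² + (2/w²) · (1/T) · Σ_{t=1}^T V_t. -/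

import Mathlib

open InnerProductSpace Finset

lemma gradient_u_eq
    {E : Type*} [NormedAddCommGroup E] [InnerProductSpace ℝ E] [CompleteSpace E]
    (r : ℤ → E → ℝ) (hrdiff : ∀ t : ℤ, Differentiable ℝ (r t))
    (w : ℕ) (u : ℤ → E → ℝ)
    (hu : ∀ (t : ℤ) (θ : E),
      u t θ = (1 / (w : ℝ)) * ∑ i ∈ Finset.range w, r (t - i) θ)
    (t : ℤ) (x : E) :
    gradient (u t) x
      = (1 / (w : ℝ)) • ∑ i ∈ Finset.range w, gradient (r (t - i)) x := by
  have hgrad : ∀ i : ℕ, HasGradientAt (r (t - i)) (gradient (r (t - i)) x) x :=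
    fun i => ((hrdiff (t - i)) x).hasGradientAt
  have hsum : HasFDerivAt (fun θ : E => ∑ i ∈ Finset.range w, r (t - i) θ)
      (∑ i ∈ Finset.range w, (toDual ℝ E) (gradient (r (t - i)) x)) x :=
    HasFDerivAt.fun_sum fun i _ => (hgrad i).hasFDerivAt
  have hsmul := hsum.fun_const_smul ((1 : ℝ) / (w : ℝ))
  have hfun : (fun θ : E => ((1 : ℝ) / (w : ℝ)) •
      (∑ i ∈ Finset.range w, r (t - i) θ)) = u t := by
    funext θ; rw [hu t θ]; simp [smul_eq_mul]
  rw [hfun] at hsmul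
  have hdual : ((1 : ℝ) / (w : ℝ)) • ∑ i ∈ Finset.range w,
      (toDual ℝ E) (gradient (r (t - i)) x)
      = (toDual ℝ E) (((1 : ℝ) / (w : ℝ)) •
          ∑ i ∈ Finset.range w, gradient (r (t - i)) x) := by
    rw [map_smulₛₗ, map_sum]
    simp
  rw [hdual] at hsmul
  simpa only [LinearIsometryEquiv.symm_apply_apply] using hsmul.hasGradientAt.gradient

theorem batch_update_regret
    {E : Type*} [NormedAddCommGroup E] [InnerProductSpace ℝ E] [CompleteSpace E]
    (r : ℤ → E → ℝ) (hrdiff : ∀ t : ℤ, Differentiable ℝ (r t))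
    (hr0 : ∀ s : ℤ, s ≤ 0 → r s = 0)
    (w T : ℕ) (hw : 1 ≤ w) (hT : 1 ≤ T)
    (δ : ℝ) (hδ : 0 ≤ δ)
    (u : ℤ → E → ℝ)
    (hu : ∀ (t : ℤ) (θ : E),
      u t θ = (1 / (w : ℝ)) * ∑ i ∈ Finset.range w, r (t - i) θ)
    (θ : ℤ → E)
    (hterm : ∀ t ∈ Finset.Icc (1 : ℤ) (T : ℤ),
      ‖gradient (u (t - 1)) (θ t)‖ ≤ δ)
    (V : ℤ → ℝ)
    (hVnonneg : ∀ t ∈ Finset.Icc (1 : ℤ) (T : ℤ), 0 ≤ V t)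
    (hV : ∀ t ∈ Finset.Icc (1 : ℤ) (T : ℤ), ∀ x : E,
      ‖gradient (r t) x - gradient (r (t - w)) x‖ ^ 2 ≤ V t) :
    (1 / (T : ℝ)) * ∑ t ∈ Finset.Icc (1 : ℤ) (T : ℤ), ‖gradient (u t) (θ t)‖ ^ 2
      ≤ 2 * δ ^ 2
        + (2 / (w : ℝ) ^ 2) *
            ((1 / (T : ℝ)) * ∑ t ∈ Finset.Icc (1 : ℤ) (T : ℤ), V t) := by
  have hwpos : (0 : ℝ) < (w : ℝ) := by exact_mod_cast hw
  have hTpos : (0 : ℝ) < (T : ℝ) := by exact_mod_cast hT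
  -- pointwise bound
  have key : ∀ t ∈ Finset.Icc (1 : ℤ) (T : ℤ),
      ‖gradient (u t) (θ t)‖ ^ 2 ≤ 2 * δ ^ 2 + (2 / (w : ℝ) ^ 2) * V t := by
    intro t ht
    set x := θ t
    set a := gradient (u t) x with ha
    set b := gradient (u (t - 1)) x with hb
    have hdiff : a - b = (1 / (w : ℝ)) •
        (gradient (r t) x - gradient (r (t - w)) x) := by
      rw [ha, hb, gradient_u_eq r hrdiff w u hu t x,
        gradient_u_eq r hrdiff w u hu (t - 1) x, ← smul_sub]
      congr 1
      have h2 : ∀ i : ℕ, t - 1 - (i : ℤ) = t - ((i + 1 : ℕ) : ℤ) := by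
        intro i; push_cast; ring
      have hre : ∑ i ∈ Finset.range w, gradient (r (t - 1 - i)) x
          = ∑ i ∈ Finset.range w, gradient (r (t - ((i + 1 : ℕ) : ℤ))) x := by
        refine Finset.sum_congr rfl fun i _ => by rw [h2 i]
      rw [hre, ← Finset.sum_sub_distrib]
      have := Finset.sum_range_sub (fun i : ℕ => gradient (r (t - (i : ℤ))) x) w
      have h3 : ∑ i ∈ Finset.range w,
          (gradient (r (t - (i : ℤ))) x - gradient (r (t - ((i + 1 : ℕ) : ℤ))) x)
          = gradient (r (t - (0 : ℕ))) x - gradient (r (t - (w : ℤ))) x := by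
        have hneg : ∑ i ∈ Finset.range w,
            (gradient (r (t - (i : ℤ))) x - gradient (r (t - ((i + 1 : ℕ) : ℤ))) x)
            = -∑ i ∈ Finset.range w,
              (gradient (r (t - ((i + 1 : ℕ) : ℤ))) x - gradient (r (t - (i : ℤ))) x) := by
          rw [← Finset.sum_neg_distrib]
          exact Finset.sum_congr rfl fun i _ => (neg_sub _ _).symm
        rw [hneg, this]
        push_cast
        abel
      rw [h3]
      norm_num
    have hb_le : ‖b‖ ≤ δ := hterm t ht
    have hab : ‖a - b‖ ^ 2 ≤ (1 / (w : ℝ) ^ 2) * V t := by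
      rw [hdiff, norm_smul]
      have := hV t ht x
      have h1 : |(1 : ℝ) / (w : ℝ)| = 1 / (w : ℝ) := abs_of_pos (by positivity)
      rw [Real.norm_eq_abs, h1, mul_pow]
      calc (1 / (w : ℝ)) ^ 2 * ‖gradient (r t) x - gradient (r (t - w)) x‖ ^ 2
          ≤ (1 / (w : ℝ)) ^ 2 * V t := by
            apply mul_le_mul_of_nonneg_left this (by positivity)
        _ = (1 / (w : ℝ) ^ 2) * V t := by ring
    have htri : ‖a‖ ≤ ‖b‖ + ‖a - b‖ := by
      calc ‖a‖ = ‖b + (a - b)‖ := by congr 1; abel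
        _ ≤ ‖b‖ + ‖a - b‖ := norm_add_le _ _
    have hVt := hVnonneg t ht
    have hasq : ‖a‖ ^ 2 ≤ (‖b‖ + ‖a - b‖) ^ 2 :=
      pow_le_pow_left₀ (norm_nonneg a) htri 2
    have hbsq : ‖b‖ ^ 2 ≤ δ ^ 2 := pow_le_pow_left₀ (norm_nonneg b) hb_le 2
    have hrw : 2 / (w : ℝ) ^ 2 * V t = 2 * (1 / (w : ℝ) ^ 2 * V t) := by ring
    rw [hrw]
    nlinarith [sq_nonneg (‖b‖ - ‖a - b‖), norm_nonneg b, norm_nonneg (a - b)]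
  have hsum : ∑ t ∈ Finset.Icc (1 : ℤ) (T : ℤ), ‖gradient (u t) (θ t)‖ ^ 2
      ≤ ∑ t ∈ Finset.Icc (1 : ℤ) (T : ℤ), (2 * δ ^ 2 + (2 / (w : ℝ) ^ 2) * V t) :=
    Finset.sum_le_sum key
  have hcard : (Finset.Icc (1 : ℤ) (T : ℤ)).card = T := by
    rw [Int.card_Icc]; simp
  rw [Finset.sum_add_distrib, Finset.sum_const, hcard, ← Finset.mul_sum] at hsum
  have h1T : (0:ℝ) < 1 / (T : ℝ) := by positivity
  calc (1 / (T : ℝ)) * ∑ t ∈ Finset.Icc (1 : ℤ) (T : ℤ), ‖gradient (u t) (θ t)‖ ^ 2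
      ≤ (1 / (T : ℝ)) * ((T : ℝ) * (2 * δ ^ 2)
          + (2 / (w : ℝ) ^ 2) * ∑ t ∈ Finset.Icc (1 : ℤ) (T : ℤ), V t) := by
        apply mul_le_mul_of_nonneg_left _ h1T.le
        convert hsum using 2
        push_cast
        exacts [rfl, (nsmul_eq_mul _ _).symm]
    _ = 2 * δ ^ 2 + (2 / (w : ℝ) ^ 2) *
          ((1 / (T : ℝ)) * ∑ t ∈ Finset.Icc (1 : ℤ) (T : ℤ), V t) := by
        field_simp
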